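/- Growth comparison of two seminorm families on entire functions: (i) for R > 0 and ε > 0, sup_{z}|F(z)|exp(−ε|z|^{1/R}) ≤ Σ_k k!^R c_k ((R/ε)^R)^k whenever F(z) = Σ_k c_k z^k with c_k ≥ 0; (ii) conversely for c,ε > 0 with c·(eε/R)^R < 1, Σ_k k!^R c_k c^k ≤ (sup_z |F(z)|exp(−ε|z|^{1/R}))/(1 − c(eε/R)^R). The scalar core: k!^R t^k ≤ sup_{s≥0} s^k exp(...) reduces to sup_{s≥0} s^k e^{−εs^{1/R}} = (kR/(eε))^{kR} and the bound k^k ≤ e^k k!. -/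

import Mathlib

open Real

lemma aux1 (k : ℕ) : (k : ℝ) ^ k ≤ Real.exp 1 ^ k * (k.factorial : ℝ) := by
  have h := Real.pow_div_factorial_le_exp (x := (k:ℝ)) (Nat.cast_nonneg k) k
  have hfac : (0:ℝ) < k.factorial := by exact_mod_cast k.factorial_pos
  have : Real.exp (k:ℝ) = Real.exp 1 ^ k := by
    rw [← Real.exp_nat_mul]; ring_nf
  rw [div_le_iff₀ hfac] at h
  rw [this] at h
  exact h

lemma aux2 {ε a t : ℝ} (hε : 0 < ε) (ha : 0 ≤ a) (ht : 0 ≤ t) :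
    t ^ a * Real.exp (-(ε * t)) ≤ (a / (Real.exp 1 * ε)) ^ a := by
  rcases ha.eq_or_lt with rfl | ha'
  · simp only [Real.rpow_zero, one_mul]
    exact Real.exp_le_one_iff.mpr (by nlinarith)
  rcases ht.eq_or_lt with rfl | ht'
  · rw [Real.zero_rpow ha'.ne']
    exact le_trans (by simp) (Real.rpow_nonneg (by positivity) a)
  · have hlog := Real.log_le_sub_one_of_pos (show 0 < ε * t / a by positivity)
    have hlogs : Real.log (ε * t / a) = Real.log ε + Real.log t - Real.log a := by
      rw [Real.log_div (by positivity) ha'.ne', Real.log_mul hε.ne' ht'.ne']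
    have key : a * Real.log t - ε * t ≤ a * Real.log (a / (Real.exp 1 * ε)) := by
      have hla : Real.log (a / (Real.exp 1 * ε)) = Real.log a - 1 - Real.log ε := by
        rw [Real.log_div ha'.ne' (by positivity), Real.log_mul (Real.exp_ne_zero 1) hε.ne',
          Real.log_exp]
        ring
      rw [hla]
      rw [hlogs] at hlog
      have h2 : a * (Real.log ε + Real.log t - Real.log a) ≤ a * (ε * t / a - 1) :=
        mul_le_mul_of_nonneg_left hlog ha
      have h3 : a * (ε * t / a - 1) = ε * t - a := by field_simp
      nlinarith
    calc t ^ a * Real.exp (-(ε * t)) = Real.exp (a * Real.log t - ε * t) := by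
          rw [Real.rpow_def_of_pos ht', ← Real.exp_add]; ring_nf
      _ ≤ Real.exp (a * Real.log (a / (Real.exp 1 * ε))) := Real.exp_le_exp.mpr key
      _ = (a / (Real.exp 1 * ε)) ^ a := by
          rw [Real.rpow_def_of_pos (by positivity)]; ring_nf

lemma aux3 {R : ℝ} (hR : 0 < R) {ε : ℝ} (hε : 0 < ε) (k : ℕ) {s : ℝ} (hs : 0 ≤ s) :
    s ^ k * Real.exp (-(ε * s ^ (1 / R))) ≤
      ((k : ℝ) * R / (Real.exp 1 * ε)) ^ ((k : ℝ) * R) := by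
  have h := aux2 (a := (k:ℝ) * R) (t := s ^ (1/R)) hε (by positivity)
    (Real.rpow_nonneg hs _)
  have hpow : (s ^ (1/R)) ^ ((k:ℝ) * R) = s ^ k := by
    rw [← Real.rpow_natCast s k, ← Real.rpow_mul hs]
    congr 1
    field_simp
  rwa [hpow] at h

lemma aux4 {R : ℝ} (hR : 0 < R) {ε : ℝ} (hε : 0 < ε) (k : ℕ) {r : ℝ} (hr : 0 ≤ r) :
    r ^ k * Real.exp (-(ε * r ^ (1 / R))) ≤
      (k.factorial : ℝ) ^ R * ((R / ε) ^ R) ^ k := by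
  refine (aux3 hR hε k hr).trans ?_
  have e1 : (k : ℝ) * R / (Real.exp 1 * ε) = ((k : ℝ) / Real.exp 1) * (R / ε) := by
    field_simp
  have hke : (0:ℝ) ≤ (k : ℝ) / Real.exp 1 := by positivity
  have hRε : (0:ℝ) ≤ R / ε := by positivity
  rw [e1, Real.mul_rpow hke hRε]
  have e2 : ((k : ℝ) / Real.exp 1) ^ ((k:ℝ) * R) = (((k:ℝ) / Real.exp 1) ^ k) ^ R := by
    rw [Real.rpow_mul hke, Real.rpow_natCast]
  have e3 : (R / ε) ^ ((k:ℝ) * R) = ((R / ε) ^ R) ^ k := by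
    rw [mul_comm, Real.rpow_mul hRε, Real.rpow_natCast]
  rw [e2, e3]
  apply mul_le_mul_of_nonneg_right _ (by positivity)
  apply Real.rpow_le_rpow (by positivity) _ hR.le
  rw [div_pow, div_le_iff₀ (by positivity)]
  linarith [aux1 k]

theorem entire_order_type_norm_comparison (R : ℝ) (hR : 0 < R) (c : ℕ → ℝ)
    (hc : ∀ k, 0 ≤ c k) (hEnt : ∀ z : ℂ, Summable fun k : ℕ => (c k : ℂ) * z ^ k) :
    (∀ k : ℕ, (k : ℝ) ^ k ≤ Real.exp 1 ^ k * (k.factorial : ℝ)) ∧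
    (∀ ε : ℝ, 0 < ε → ∀ (k : ℕ) (s : ℝ), 0 ≤ s →
      s ^ k * Real.exp (-(ε * s ^ (1 / R))) ≤
        ((k : ℝ) * R / (Real.exp 1 * ε)) ^ ((k : ℝ) * R)) ∧
    (∀ ε : ℝ, 0 < ε →
      (Summable fun k : ℕ => (k.factorial : ℝ) ^ R * c k * ((R / ε) ^ R) ^ k) →
      ∀ z : ℂ, ‖∑' k : ℕ, (c k : ℂ) * z ^ k‖ * Real.exp (-(ε * ‖z‖ ^ (1 / R))) ≤
        ∑' k : ℕ, (k.factorial : ℝ) ^ R * c k * ((R / ε) ^ R) ^ k) ∧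
    (∀ c0 ε Nb : ℝ, 0 < c0 → 0 < ε → c0 * (Real.exp 1 * ε / R) ^ R < 1 →
      (∀ z : ℂ, ‖∑' k : ℕ, (c k : ℂ) * z ^ k‖ * Real.exp (-(ε * ‖z‖ ^ (1 / R))) ≤ Nb) →
      (Summable fun k : ℕ => (k.factorial : ℝ) ^ R * c k * c0 ^ k) ∧
      ∑' k : ℕ, (k.factorial : ℝ) ^ R * c k * c0 ^ k ≤
        Nb / (1 - c0 * (Real.exp 1 * ε / R) ^ R)) := by
  -- summability of the real coefficient series at nonneg radii
  have hsumr : ∀ r : ℝ, Summable fun k : ℕ => c k * r ^ k := by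
    intro r
    have h := hEnt (r : ℂ)
    have he : (fun k : ℕ => (c k : ℂ) * (r:ℂ) ^ k) = fun k : ℕ => ((c k * r ^ k : ℝ) : ℂ) := by
      funext k; push_cast; ring
    rw [he] at h
    exact Complex.summable_ofReal.mp h
  -- evaluation bound at nonneg real r: value of |F| series
  refine ⟨aux1, fun ε hε k s hs => aux3 hR hε k hs, ?_, ?_⟩
  · intro ε hε hSum z
    set r := ‖z‖ with hrdef
    have hr : (0:ℝ) ≤ r := norm_nonneg z
    have hnormterm : ∀ k : ℕ, ‖(c k : ℂ) * z ^ k‖ = c k * r ^ k := by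
      intro k
      rw [norm_mul, norm_pow, Complex.norm_real, Real.norm_eq_abs, abs_of_nonneg (hc k)]
    have h1 : ‖∑' k : ℕ, (c k : ℂ) * z ^ k‖ ≤ ∑' k : ℕ, c k * r ^ k := by
      have hs2 : Summable fun k : ℕ => ‖(c k : ℂ) * z ^ k‖ := by
        simpa only [hnormterm] using hsumr r
      calc ‖∑' k : ℕ, (c k : ℂ) * z ^ k‖ ≤ ∑' k : ℕ, ‖(c k : ℂ) * z ^ k‖ :=
            norm_tsum_le_tsum_norm hs2
        _ = ∑' k : ℕ, c k * r ^ k := tsum_congr hnormterm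
    set E := Real.exp (-(ε * r ^ (1/R))) with hE
    have hE0 : (0:ℝ) ≤ E := (Real.exp_pos _).le
    calc ‖∑' k : ℕ, (c k : ℂ) * z ^ k‖ * E ≤ (∑' k : ℕ, c k * r ^ k) * E :=
          mul_le_mul_of_nonneg_right h1 hE0
      _ = ∑' k : ℕ, c k * r ^ k * E := tsum_mul_right.symm
      _ ≤ ∑' k : ℕ, (k.factorial : ℝ) ^ R * c k * ((R / ε) ^ R) ^ k := by
          refine Summable.tsum_le_tsum (fun k => ?_) ((hsumr r).mul_right E) hSum
          calc c k * r ^ k * E = c k * (r ^ k * E) := by ring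
            _ ≤ c k * ((k.factorial : ℝ) ^ R * ((R / ε) ^ R) ^ k) :=
                mul_le_mul_of_nonneg_left (aux4 hR hε k hr) (hc k)
            _ = (k.factorial : ℝ) ^ R * c k * ((R / ε) ^ R) ^ k := by ring
  · intro c0 ε Nb hc0 hε hq hBound
    set q := c0 * (Real.exp 1 * ε / R) ^ R with hqdef
    have hq0 : 0 < q := by positivity
    have heval : ∀ r : ℝ, 0 ≤ r →
        (∑' j : ℕ, c j * r ^ j) * Real.exp (-(ε * r ^ (1/R))) ≤ Nb := by
      intro r hr
      have h := hBound (r : ℂ)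
      have htsum : (∑' j : ℕ, (c j : ℂ) * (r:ℂ) ^ j) = ((∑' j : ℕ, c j * r ^ j : ℝ) : ℂ) := by
        rw [Complex.ofReal_tsum]
        exact tsum_congr fun j => by push_cast; ring
      have hnz : ‖(r:ℂ)‖ = r := by
        rw [Complex.norm_real, Real.norm_eq_abs, abs_of_nonneg hr]
      rw [htsum, hnz, Complex.norm_real, Real.norm_eq_abs,
        abs_of_nonneg (tsum_nonneg fun j => mul_nonneg (hc j) (pow_nonneg hr j))] at h
      exact h
    have htermle : ∀ (r : ℝ), 0 ≤ r → ∀ k : ℕ,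
        c k * r ^ k * Real.exp (-(ε * r ^ (1/R))) ≤ Nb := by
      intro r hr k
      refine le_trans (mul_le_mul_of_nonneg_right ?_ (Real.exp_pos _).le) (heval r hr)
      exact Summable.le_tsum (hsumr r) k fun j _ => mul_nonneg (hc j) (pow_nonneg hr j)
    have hNb : 0 ≤ Nb := by
      have h := htermle 0 le_rfl 0
      simp only [pow_zero, mul_one, Real.zero_rpow (one_div_ne_zero hR.ne'), mul_zero,
        neg_zero, Real.exp_zero] at h
      exact le_trans (hc 0) h
    have hterm : ∀ k : ℕ, (k.factorial : ℝ) ^ R * c k * c0 ^ k ≤ Nb * q ^ k := by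
      intro k
      rcases Nat.eq_zero_or_pos k with rfl | hk
      · simp only [Nat.factorial_zero, Nat.cast_one, Real.one_rpow, one_mul, pow_zero, mul_one]
        have h := htermle 0 le_rfl 0
        simp only [pow_zero, mul_one, Real.zero_rpow (one_div_ne_zero hR.ne'), mul_zero,
          neg_zero, Real.exp_zero] at h
        exact h
      · have hkpos : (0:ℝ) < (k:ℝ) := by exact_mod_cast hk
        set r := (((k:ℝ) * R) / ε) ^ R with hrdef
        have hrpos : 0 < r := Real.rpow_pos_of_pos (by positivity) R
        have hr1R : r ^ (1/R) = (k:ℝ) * R / ε := by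
          rw [hrdef, ← Real.rpow_mul (by positivity), mul_one_div_cancel hR.ne',
            Real.rpow_one]
        have hbk := htermle r hrpos.le k
        rw [hr1R, show ε * ((k:ℝ) * R / ε) = (k:ℝ) * R by field_simp] at hbk
        -- key : k!^R * exp(kR) ≤ ((e ε / R)^R)^k * r^k
        have key : (k.factorial : ℝ) ^ R * Real.exp ((k:ℝ) * R) ≤
            ((Real.exp 1 * ε / R) ^ R) ^ k * r ^ k := by
          have hrhs : ((Real.exp 1 * ε / R) ^ R) ^ k * r ^ k
              = ((Real.exp 1 * (k:ℝ)) ^ k) ^ R := by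
            rw [hrdef, ← mul_pow, ← Real.mul_rpow (by positivity) (by positivity),
              show Real.exp 1 * ε / R * ((k:ℝ) * R / ε) = Real.exp 1 * (k:ℝ) by field_simp,
              ← Real.rpow_natCast ((Real.exp 1 * (k:ℝ)) ^ R) k,
              ← Real.rpow_mul (by positivity),
              ← Real.rpow_natCast (Real.exp 1 * (k:ℝ)) k,
              ← Real.rpow_mul (by positivity), mul_comm R ((k:ℝ))]
          have hlhs : (k.factorial : ℝ) ^ R * Real.exp ((k:ℝ) * R)
              = ((k.factorial : ℝ) * Real.exp 1 ^ k) ^ R := by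
            rw [Real.mul_rpow (by positivity) (by positivity)]
            congr 1
            rw [← Real.exp_one_rpow ((k:ℝ) * R), Real.rpow_mul (Real.exp_pos 1).le,
              Real.rpow_natCast]
          rw [hlhs, hrhs]
          apply Real.rpow_le_rpow (by positivity) _ hR.le
          rw [mul_pow]
          have hfk : (k.factorial : ℝ) ≤ (k:ℝ) ^ k := by
            exact_mod_cast Nat.factorial_le_pow k
          nlinarith [pow_pos (Real.exp_pos 1) k, pow_nonneg (Real.exp_pos 1).le k,
            mul_le_mul_of_nonneg_right hfk (pow_nonneg (Real.exp_pos 1).le k)]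
        have h2 : (k.factorial : ℝ) ^ R * c k * c0 ^ k =
            (c k * r ^ k * Real.exp (-((k:ℝ) * R))) *
              ((k.factorial : ℝ) ^ R * Real.exp ((k:ℝ) * R) * c0 ^ k / r ^ k) := by
          rw [Real.exp_neg]
          field_simp
        have h3 : (k.factorial : ℝ) ^ R * Real.exp ((k:ℝ) * R) * c0 ^ k / r ^ k ≤ q ^ k := by
          rw [div_le_iff₀ (pow_pos hrpos k)]
          calc (k.factorial : ℝ) ^ R * Real.exp ((k:ℝ) * R) * c0 ^ k
              ≤ ((Real.exp 1 * ε / R) ^ R) ^ k * r ^ k * c0 ^ k :=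
                mul_le_mul_of_nonneg_right key (pow_nonneg hc0.le k)
            _ = q ^ k * r ^ k := by rw [hqdef, mul_pow]; ring
        rw [h2]
        have hsnd : 0 ≤ (k.factorial : ℝ) ^ R * Real.exp ((k:ℝ) * R) * c0 ^ k / r ^ k :=
          div_nonneg (by positivity) (by positivity)
        exact mul_le_mul hbk h3 hsnd hNb
    have hgeom : Summable fun k : ℕ => Nb * q ^ k :=
      (summable_geometric_of_lt_one hq0.le hq).mul_left Nb
    have hsummb : Summable fun k : ℕ => (k.factorial : ℝ) ^ R * c k * c0 ^ k := by
      refine Summable.of_nonneg_of_le (fun k => mul_nonneg (mul_nonneg (Real.rpow_nonneg (Nat.cast_nonneg _) R) (hc k)) (pow_nonneg hc0.le k)) hterm hgeom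
    refine ⟨hsummb, ?_⟩
    calc ∑' k : ℕ, (k.factorial : ℝ) ^ R * c k * c0 ^ k ≤ ∑' k : ℕ, Nb * q ^ k :=
          Summable.tsum_le_tsum hterm hsummb hgeom
      _ = Nb * (1 - q)⁻¹ := by rw [tsum_mul_left, tsum_geometric_of_lt_one hq0.le hq]
      _ = Nb / (1 - q) := by rw [div_eq_mul_inv]
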